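/- Let Γ be the group with presentation ⟨x_1, …, x_t, d_1, …, d_h ∣ x_1⋯x_t·d_1²⋯d_h² = 1, x_1^p = ⋯ = x_t^p = 1⟩ with t ≥ 0 and h ≥ 1. Then there exists a group automorphism ψ : Γ → Γ such that: (i) for every group homomorphism θ from Γ to the additive group ℤ/p one has θ(ψ(u)) = -θ(u) for all u ∈ Γ; and (ii) for each i = 1, …, t, the element ψ(x_i) is conjugate in Γ to x_i⁻¹. -/

import Mathlib

namespace Stmt7

variable (p t h : ℕ)

/-- The long relation `x_1 ⋯ x_t · d_1² ⋯ d_h²` in the free group on `t + h` generators,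
where `x_i` corresponds to `Sum.inl i` and `d_j` to `Sum.inr j`. -/
def longRel : FreeGroup (Fin t ⊕ Fin h) :=
  (((List.finRange t).map fun i => FreeGroup.of (Sum.inl i)).prod) *
  (((List.finRange h).map fun j => (FreeGroup.of (Sum.inr j)) ^ 2).prod)

/-- The relations `x_1 ⋯ x_t · d_1² ⋯ d_h² = 1` and `x_i^p = 1`. -/
def rels : Set (FreeGroup (Fin t ⊕ Fin h)) :=
  insert (longRel t h) (Set.range fun i : Fin t => (FreeGroup.of (Sum.inl i : Fin t ⊕ Fin h)) ^ p)

/-- The NEC group `Γ = ⟨x_1, …, x_t, d_1, …, d_h ∣ x_1⋯x_t·d_1²⋯d_h² = x_1^p = ⋯ = x_t^p = 1⟩`. -/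
abbrev Γ := PresentedGroup (rels p t h)

/-- The elliptic generator `x_i`. -/
def x (i : Fin t) : Γ p t h := PresentedGroup.of (Sum.inl i)

/-- The glide-reflection generator `d_j`. -/
def d (j : Fin h) : Γ p t h := PresentedGroup.of (Sum.inr j)

lemma tele {G : Type*} [Group G] (l : List G) (n : ℕ) :
    ((List.range n).map (fun k => (l.take k).prod * (l.getD k 1)⁻¹ * ((l.take k).prod)⁻¹)).prod
      = ((l.take n).prod)⁻¹ := by
  induction n with
  | zero => simp
  | succ n ih =>
    rw [List.range_succ, List.map_append, List.prod_append, ih]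
    simp only [List.map_singleton, List.prod_singleton]
    by_cases hn : n < l.length
    · rw [List.prod_take_succ _ _ hn, List.getD_eq_getElem _ _ hn]
      group
    · push_neg at hn
      rw [List.take_of_length_le hn, List.take_of_length_le (le_trans hn (Nat.le_succ n)),
        List.getD_eq_default _ _ hn]
      group

def lx : List (Γ p t h) := (List.finRange t).map (x p t h)
def ld : List (Γ p t h) := (List.finRange h).map (fun j => (d p t h j) ^ 2)

def Fψ : Fin t ⊕ Fin h → Γ p t h
  | .inl i => (((lx p t h).take i).prod) * (x p t h i)⁻¹ * ((((lx p t h).take i).prod))⁻¹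
  | .inr j => (((ld p t h).take j).prod) * (d p t h j)⁻¹ * ((((ld p t h).take j).prod))⁻¹

lemma conjpow {G : Type*} [Group G] (a b : G) (n : ℕ) :
    (a * b * a⁻¹) ^ n = a * b ^ n * a⁻¹ := by
  induction n with
  | zero => simp
  | succ n ih => rw [pow_succ, pow_succ, ih]; group

lemma getD_lx (i : Fin t) : (lx p t h).getD i.val 1 = x p t h i := by
  have hi : i.val < (lx p t h).length := by simp [lx]
  rw [List.getD_eq_getElem _ _ hi]
  simp [lx]

lemma getD_ld (j : Fin h) : (ld p t h).getD j.val 1 = (d p t h j) ^ 2 := by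
  have hj : j.val < (ld p t h).length := by simp [ld]
  rw [List.getD_eq_getElem _ _ hj]
  simp [ld]

lemma take_min (n : ℕ) : (lx p t h).take (min n t) = (lx p t h).take n := by
  rw [List.take_eq_take_iff]
  simp [lx, Nat.min_assoc]

lemma take_min_d (n : ℕ) : (ld p t h).take (min n h) = (ld p t h).take n := by
  rw [List.take_eq_take_iff]
  simp [ld, Nat.min_assoc]

lemma prod_map_take_x (n : ℕ) :
    ((((List.finRange t).take n)).map (fun i => Fψ p t h (Sum.inl i))).prod
      = ((((lx p t h).take n)).prod)⁻¹ := by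
  have h1 : ∀ i : Fin t, Fψ p t h (Sum.inl i)
      = (fun k => ((lx p t h).take k).prod * ((lx p t h).getD k 1)⁻¹
          * (((lx p t h).take k).prod)⁻¹) i.val := by
    intro i
    simp only [Fψ, getD_lx]
  calc ((((List.finRange t).take n)).map (fun i => Fψ p t h (Sum.inl i))).prod
      = ((((List.finRange t).take n)).map ((fun k => ((lx p t h).take k).prod
          * ((lx p t h).getD k 1)⁻¹ * (((lx p t h).take k).prod)⁻¹) ∘ Fin.val)).prod := by
        rw [List.map_congr_left (fun i _ => h1 i)]; rfl
    _ = ((((lx p t h).take n)).prod)⁻¹ := by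
        rw [← List.map_map, List.map_take,
          (show (List.finRange t).map Fin.val = List.range t from List.ext_getElem (by simp) (by simp)),
          List.take_range, tele,
          take_min]

lemma prod_map_take_d (n : ℕ) :
    ((((List.finRange h).take n)).map (fun j => (Fψ p t h (Sum.inr j)) ^ 2)).prod
      = ((((ld p t h).take n)).prod)⁻¹ := by
  have h1 : ∀ j : Fin h, (Fψ p t h (Sum.inr j)) ^ 2
      = (fun k => ((ld p t h).take k).prod * ((ld p t h).getD k 1)⁻¹
          * (((ld p t h).take k).prod)⁻¹) j.val := by
    intro j
    simp only [Fψ, getD_ld]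
    rw [conjpow, inv_pow]
  calc ((((List.finRange h).take n)).map (fun j => (Fψ p t h (Sum.inr j)) ^ 2)).prod
      = ((((List.finRange h).take n)).map ((fun k => ((ld p t h).take k).prod
          * ((ld p t h).getD k 1)⁻¹ * (((ld p t h).take k).prod)⁻¹) ∘ Fin.val)).prod := by
        rw [List.map_congr_left (fun j _ => h1 j)]; rfl
    _ = ((((ld p t h).take n)).prod)⁻¹ := by
        rw [← List.map_map, List.map_take,
          (show (List.finRange h).map Fin.val = List.range h from List.ext_getElem (by simp) (by simp)),
          List.take_range, tele,
          take_min_d]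

lemma rel_long : (lx p t h).prod * (ld p t h).prod = 1 := by
  have hm : longRel t h ∈ rels p t h := Set.mem_insert _ _
  have h1 : PresentedGroup.mk (rels p t h) (longRel t h) = 1 :=
    (QuotientGroup.eq_one_iff _).mpr (Subgroup.subset_normalClosure hm)
  rw [longRel, map_mul, map_list_prod, map_list_prod, List.map_map, List.map_map] at h1
  convert h1 using 3 <;> rfl

lemma rel_x (i : Fin t) : (x p t h i) ^ p = 1 := by
  have hm : (FreeGroup.of (Sum.inl i : Fin t ⊕ Fin h)) ^ p ∈ rels p t h :=
    Set.mem_insert_iff.mpr (Or.inr ⟨i, rfl⟩)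
  have h1 : PresentedGroup.mk (rels p t h) ((FreeGroup.of (Sum.inl i)) ^ p) = 1 :=
    (QuotientGroup.eq_one_iff _).mpr (Subgroup.subset_normalClosure hm)
  rw [map_pow] at h1
  exact h1

lemma hF : ∀ r ∈ rels p t h, FreeGroup.lift (Fψ p t h) r = 1 := by
  intro r hr
  rcases Set.mem_insert_iff.mp hr with h1 | ⟨i, hi⟩
  · subst h1
    rw [longRel, map_mul, map_list_prod, map_list_prod, List.map_map, List.map_map]
    have e1 : (List.finRange t).map ((FreeGroup.lift (Fψ p t h)) ∘ fun i => FreeGroup.of (Sum.inl i))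
        = (List.finRange t).map (fun i => Fψ p t h (Sum.inl i)) := by
      simp
    have e2 : (List.finRange h).map ((FreeGroup.lift (Fψ p t h)) ∘ fun j => (FreeGroup.of (Sum.inr j)) ^ 2)
        = (List.finRange h).map (fun j => (Fψ p t h (Sum.inr j)) ^ 2) := by
      simp
    rw [e1, e2]
    have hx := prod_map_take_x p t h t
    have hd := prod_map_take_d p t h h
    rw [List.take_of_length_le (by simp)] at hx hd
    rw [List.take_of_length_le (by simp [lx])] at hx
    rw [List.take_of_length_le (by simp [ld])] at hd
    rw [hx, hd]
    have := rel_long p t h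
    rw [← eq_inv_iff_mul_eq_one] at this ⊢
    rw [this]
  · subst hi
    rw [map_pow, FreeGroup.lift_apply_of]
    show (Fψ p t h (Sum.inl i)) ^ p = 1
    rw [Fψ, conjpow, inv_pow, rel_x]
    group


def psiHom : Γ p t h →* Γ p t h := PresentedGroup.toGroup (hF p t h)

lemma psiHom_of (s : Fin t ⊕ Fin h) :
    psiHom p t h (PresentedGroup.of s) = Fψ p t h s :=
  PresentedGroup.toGroup.of (hF p t h)

lemma psiHom_x (i : Fin t) : psiHom p t h (x p t h i) = Fψ p t h (Sum.inl i) :=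
  psiHom_of p t h (Sum.inl i)

lemma psiHom_d (j : Fin h) : psiHom p t h (d p t h j) = Fψ p t h (Sum.inr j) :=
  psiHom_of p t h (Sum.inr j)

lemma psiHom_take_x (n : ℕ) :
    psiHom p t h (((lx p t h).take n).prod) = ((((lx p t h).take n)).prod)⁻¹ := by
  rw [map_list_prod]
  have e : ((lx p t h).take n).map (psiHom p t h)
      = ((List.finRange t).take n).map (fun i => Fψ p t h (Sum.inl i)) := by
    rw [lx, ← List.map_take, List.map_map]
    exact List.map_congr_left (fun i _ => psiHom_x p t h i)
  rw [e, prod_map_take_x]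

lemma psiHom_take_d (n : ℕ) :
    psiHom p t h (((ld p t h).take n).prod) = ((((ld p t h).take n)).prod)⁻¹ := by
  rw [map_list_prod]
  have e : ((ld p t h).take n).map (psiHom p t h)
      = ((List.finRange h).take n).map (fun j => (Fψ p t h (Sum.inr j)) ^ 2) := by
    rw [ld, ← List.map_take, List.map_map]
    refine List.map_congr_left (fun j _ => ?_)
    simp only [Function.comp_apply, map_pow, psiHom_d]
  rw [e, prod_map_take_d]

lemma psi_invol : (psiHom p t h).comp (psiHom p t h) = MonoidHom.id _ := by
  ext s
  cases s with
  | inl i =>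
    show psiHom p t h (psiHom p t h (PresentedGroup.of (Sum.inl i))) = PresentedGroup.of (Sum.inl i)
    rw [psiHom_of]
    show psiHom p t h (Fψ p t h (Sum.inl i)) = x p t h i
    simp only [Fψ, map_mul, map_inv, psiHom_take_x, psiHom_x]
    group
  | inr j =>
    show psiHom p t h (psiHom p t h (PresentedGroup.of (Sum.inr j))) = PresentedGroup.of (Sum.inr j)
    rw [psiHom_of]
    show psiHom p t h (Fψ p t h (Sum.inr j)) = d p t h j
    simp only [Fψ, map_mul, map_inv, psiHom_take_d, psiHom_d]
    group


/-- there is an automorphism `ψ` of `Γ` such that (i) for every homomorphism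
`θ` from `Γ` to the additive group `ℤ/p` one has `θ(ψ(u)) = -θ(u)` for all `u ∈ Γ`, and
(ii) each `ψ(x_i)` is conjugate in `Γ` to `x_i⁻¹`. -/
theorem stmt7 (hp : p.Prime) (hh : 0 < h) :
    ∃ ψ : Γ p t h ≃* Γ p t h,
      (∀ θ : Γ p t h →* Multiplicative (ZMod p), ∀ u : Γ p t h,
        Multiplicative.toAdd (θ (ψ u)) = - Multiplicative.toAdd (θ u)) ∧
      ∀ i : Fin t, ∃ g : Γ p t h, ψ (x p t h i) = g * (x p t h i)⁻¹ * g⁻¹ := by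
  have hinv : ∀ u : Γ p t h, psiHom p t h (psiHom p t h u) = u := fun u =>
    DFunLike.congr_fun (psi_invol p t h) u
  refine ⟨{ toFun := psiHom p t h, invFun := psiHom p t h, left_inv := hinv,
            right_inv := hinv, map_mul' := map_mul _ }, ?_, ?_⟩
  · intro θ u
    have key : ∀ a b : Multiplicative (ZMod p), a * b * a⁻¹ = b := fun a b => by
      rw [mul_comm a b, mul_inv_cancel_right]
    have hcomp : θ.comp (psiHom p t h) = θ⁻¹ := by
      ext s
      cases s with
      | inl i =>
        show θ (psiHom p t h (PresentedGroup.of (Sum.inl i))) = (θ (PresentedGroup.of (Sum.inl i)))⁻¹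
        rw [psiHom_of]
        show θ (Fψ p t h (Sum.inl i)) = (θ (x p t h i))⁻¹
        simp only [Fψ, map_mul, map_inv]
        exact key _ _
      | inr j =>
        show θ (psiHom p t h (PresentedGroup.of (Sum.inr j))) = (θ (PresentedGroup.of (Sum.inr j)))⁻¹
        rw [psiHom_of]
        show θ (Fψ p t h (Sum.inr j)) = (θ (d p t h j))⁻¹
        simp only [Fψ, map_mul, map_inv]
        exact key _ _
    have := DFunLike.congr_fun hcomp u
    simp only [MonoidHom.comp_apply, MonoidHom.inv_apply] at this
    show Multiplicative.toAdd (θ (psiHom p t h u)) = - Multiplicative.toAdd (θ u)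
    rw [this]
    rfl
  · intro i
    exact ⟨((lx p t h).take i).prod, psiHom_x p t h i⟩


end Stmt7
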